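/- (Energy bound for the POD-ROM discretization error.) Let V be a real inner product space with inner product (·,·) and norm ‖·‖, let B : V × V → ℝ be a symmetric bilinear form satisfying the Poincaré-type inequality C_p ‖v‖² ≤ B(v,v) for all v ∈ V and some constant C_p > 0, let V_r ⊆ V be a subspace, let c > 0, D ≥ 0, G ≥ 0 with D + G > 0, Δt > 0, N ≥ 3. Suppose φ^2,…,φ^N ∈ V_r and η^1,…,η^N ∈ V satisfy the error equation: for all n = 2,…,N−1 and all v ∈ V_r, (∂∂φ^n, v) + c² B(φ̂^n, v) + D (∂φ̄^n, v) + G B(∂φ̄^n, v) = (∂∂η^n, v) + D (∂η̄^n, v) (the B-terms of η are absent because η is the Ritz-projection error, so B(η-terms, v) = 0 for v ∈ V_r). Define E(φ^n) = (1/2)‖∂⁻φ^n‖² + (1/2)c² B(φ̄^n, φ̄^n) for n = 3,…,N (with E(φ^2) given using φ^1 := the appropriate initial value so that ∂⁻φ^2 and φ̄^2 are defined, i.e., take φ^1 ∈ V_r as well). Then max_{2≤j≤N} E(φ^j) ≤ E(φ^2) + (1/(D + 2C_p G)) Σ_{n=2}^{N−1} Δt ‖∂∂η^n‖² + D Σ_{n=2}^{N−1}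 Δt ‖∂η̄^n‖². -/
import Mathlib


open Finset RealInnerProductSpace

/-- forward difference quotient -/
noncomputable def fdiff {Z : Type*} [AddCommGroup Z] [Module ℝ Z]
    (dt : ℝ) (z : ℕ → Z) (j : ℕ) : Z := dt⁻¹ • (z (j + 1) - z j)

/-- backward difference quotient -/
noncomputable def bdiff {Z : Type*} [AddCommGroup Z] [Module ℝ Z]
    (dt : ℝ) (z : ℕ → Z) (j : ℕ) : Z := dt⁻¹ • (z j - z (j - 1))

/-- second difference quotient -/
noncomputable def ddq {Z : Type*} [AddCommGroup Z] [Module ℝ Z]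
    (dt : ℝ) (z : ℕ → Z) (j : ℕ) : Z :=
  (dt ^ 2)⁻¹ • (z (j + 1) - (2 : ℝ) • z j + z (j - 1))

/-- backward average -/
noncomputable def bavg {Z : Type*} [AddCommGroup Z] [Module ℝ Z]
    (z : ℕ → Z) (j : ℕ) : Z := (2 : ℝ)⁻¹ • (z j + z (j - 1))

/-- centered average -/
noncomputable def cavg {Z : Type*} [AddCommGroup Z] [Module ℝ Z]
    (z : ℕ → Z) (j : ℕ) : Z := (4 : ℝ)⁻¹ • (z (j + 1) + (2 : ℝ) • z j + z (j - 1))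

/-- centered difference -/
noncomputable def cdiff {Z : Type*} [AddCommGroup Z] [Module ℝ Z]
    (dt : ℝ) (z : ℕ → Z) (j : ℕ) : Z := (2 * dt)⁻¹ • (z (j + 1) - z (j - 1))

private lemma inner_sub_add_eq {V : Type*} [NormedAddCommGroup V] [InnerProductSpace ℝ V]
    (x y : V) : ⟪x - y, x + y⟫ = ‖x‖^2 - ‖y‖^2 := by
  rw [inner_sub_left, inner_add_right, inner_add_right,
    real_inner_self_eq_norm_sq, real_inner_self_eq_norm_sq, real_inner_comm x y]
  ring

set_option maxHeartbeats 1000000 in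
theorem stmt_19
    {V : Type*} [NormedAddCommGroup V] [InnerProductSpace ℝ V]
    (B : V →ₗ[ℝ] V →ₗ[ℝ] ℝ) (hBsymm : ∀ x y, B x y = B y x)
    (Cp : ℝ) (hCp : 0 < Cp) (hPoincare : ∀ v : V, Cp * ‖v‖ ^ 2 ≤ B v v)
    (Vr : Submodule ℝ V)
    (c D G dt : ℝ) (hc : 0 < c) (hD : 0 ≤ D) (hG : 0 ≤ G) (hDG : 0 < D + G)
    (hdt : 0 < dt) (N : ℕ) (hN : 3 ≤ N)
    (φ η : ℕ → V) (hφVr : ∀ n ∈ Finset.Icc 1 N, φ n ∈ Vr)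
    (herr : ∀ n ∈ Finset.Icc 2 (N - 1), ∀ v ∈ Vr,
      ⟪ddq dt φ n, v⟫ + c ^ 2 * B (cavg φ n) v + D * ⟪cdiff dt φ n, v⟫
        + G * B (cdiff dt φ n) v
      = ⟪ddq dt η n, v⟫ + D * ⟪cdiff dt η n, v⟫)
    (E : ℕ → ℝ)
    (hE : ∀ n ∈ Finset.Icc 2 N,
      E n = (1 / 2) * ‖bdiff dt φ n‖ ^ 2
        + (1 / 2) * c ^ 2 * B (bavg φ n) (bavg φ n)) :
    ∀ j ∈ Finset.Icc 2 N,
      E j ≤ E 2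
        + (D + 2 * Cp * G)⁻¹ * ∑ n ∈ Finset.Icc 2 (N - 1), dt * ‖ddq dt η n‖ ^ 2
        + D * ∑ n ∈ Finset.Icc 2 (N - 1), dt * ‖cdiff dt η n‖ ^ 2 := by
  have hdt0 : dt ≠ 0 := ne_of_gt hdt
  set s := D + 2 * Cp * G with hs_def
  have hs : 0 < s := by
    rw [hs_def]
    rcases hG.eq_or_lt with h | h
    · rw [← h] at hDG ⊢
      simpa using hDG
    · linarith [mul_pos hCp h]
  have hs0 : s ≠ 0 := hs.ne'
  set f : ℕ → ℝ := fun n => dt * (s⁻¹ * ‖ddq dt η n‖ ^ 2 + D * ‖cdiff dt η n‖ ^ 2) with hf_def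
  have hf_nonneg : ∀ n, 0 ≤ f n := by
    intro n
    apply mul_nonneg hdt.le
    exact add_nonneg (mul_nonneg (inv_nonneg.mpr hs.le) (sq_nonneg _))
      (mul_nonneg hD (sq_nonneg _))
  -- key one-step estimate
  have key : ∀ n, 2 ≤ n → n + 1 ≤ N → E (n + 1) ≤ E n + f n := by
    intro n hn2 hnN
    have hwVr : cdiff dt φ n ∈ Vr := by
      have h1 : φ (n + 1) ∈ Vr := hφVr _ (by simp only [Finset.mem_Icc]; omega)
      have h2 : φ (n - 1) ∈ Vr := hφVr _ (by simp only [Finset.mem_Icc]; omega)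
      exact Submodule.smul_mem _ _ (Submodule.sub_mem _ h1 h2)
    have herr' := herr n (by simp only [Finset.mem_Icc]; omega) (cdiff dt φ n) hwVr
    rw [real_inner_self_eq_norm_sq] at herr'
    -- identities
    have hP : ddq dt φ n = dt⁻¹ • (bdiff dt φ (n + 1) - bdiff dt φ n) := by
      simp only [ddq, bdiff, Nat.add_sub_cancel]
      match_scalars <;> (field_simp; try ring)
    have hW : cdiff dt φ n = (2 : ℝ)⁻¹ • (bdiff dt φ (n + 1) + bdiff dt φ n) := by
      simp only [cdiff, bdiff, Nat.add_sub_cancel]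
      match_scalars <;> (field_simp; try ring)
    have hA : cavg φ n = (2 : ℝ)⁻¹ • (bavg φ (n + 1) + bavg φ n) := by
      simp only [cavg, bavg, Nat.add_sub_cancel]
      match_scalars <;> (field_simp; try ring)
    have hW2 : cdiff dt φ n = dt⁻¹ • (bavg φ (n + 1) - bavg φ n) := by
      simp only [cdiff, bavg, Nat.add_sub_cancel]
      match_scalars <;> (field_simp; try ring)
    have id1 : ⟪ddq dt φ n, cdiff dt φ n⟫
        = (2 * dt)⁻¹ * (‖bdiff dt φ (n + 1)‖ ^ 2 - ‖bdiff dt φ n‖ ^ 2) := by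
      rw [hP]; nth_rewrite 1 [hW]
      rw [real_inner_smul_left, real_inner_smul_right, inner_sub_add_eq, mul_inv]
      ring
    have id2 : B (cavg φ n) (cdiff dt φ n)
        = (2 * dt)⁻¹ * (B (bavg φ (n + 1)) (bavg φ (n + 1)) - B (bavg φ n) (bavg φ n)) := by
      rw [hA]; nth_rewrite 1 [hW2]
      simp only [map_smul, map_add, map_sub, LinearMap.add_apply, LinearMap.sub_apply,
        LinearMap.smul_apply, smul_eq_mul]
      rw [hBsymm (bavg φ n) (bavg φ (n + 1)), mul_inv]
      ring
    have hE1 := hE n (by simp only [Finset.mem_Icc]; omega)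
    have hE2 := hE (n + 1) (by simp only [Finset.mem_Icc]; omega)
    have hEdiff : E (n + 1) - E n
        = dt * (⟪ddq dt φ n, cdiff dt φ n⟫ + c ^ 2 * B (cavg φ n) (cdiff dt φ n)) := by
      rw [hE1, hE2, id1, id2]
      field_simp
      ring
    -- bound the right-hand side
    set a := ‖ddq dt η n‖ with ha_def
    set b := ‖cdiff dt η n‖ with hb_def
    set W := ‖cdiff dt φ n‖ with hW_def
    have hb1 : ⟪ddq dt η n, cdiff dt φ n⟫ ≤ a * W := real_inner_le_norm _ _
    have hb2 : ⟪cdiff dt η n, cdiff dt φ n⟫ ≤ b * W := real_inner_le_norm _ _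
    have hb2' : D * ⟪cdiff dt η n, cdiff dt φ n⟫ ≤ D * (b * W) :=
      mul_le_mul_of_nonneg_left hb2 hD
    have hb3 : G * (Cp * W ^ 2) ≤ G * B (cdiff dt φ n) (cdiff dt φ n) :=
      mul_le_mul_of_nonneg_left (hPoincare _) hG
    have hkey : s * (s⁻¹ * a - W) ^ 2 = s⁻¹ * a ^ 2 - 2 * (a * W) + s * W ^ 2 := by
      field_simp
      ring
    have hq1 : 2 * (a * W) ≤ s⁻¹ * a ^ 2 + s * W ^ 2 := by
      have := mul_nonneg hs.le (sq_nonneg (s⁻¹ * a - W))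
      linarith
    have hq2 : D * (2 * (b * W)) ≤ D * (b ^ 2 + W ^ 2) :=
      mul_le_mul_of_nonneg_left (by nlinarith [sq_nonneg (b - W)]) hD
    have hsW : s * W ^ 2 = D * W ^ 2 + 2 * (Cp * (G * W ^ 2)) := by rw [hs_def]; ring
    have hann : 0 ≤ s⁻¹ * a ^ 2 := mul_nonneg (inv_nonneg.mpr hs.le) (sq_nonneg _)
    have hbnn : 0 ≤ D * b ^ 2 := mul_nonneg hD (sq_nonneg _)
    have hX : ⟪ddq dt φ n, cdiff dt φ n⟫ + c ^ 2 * B (cavg φ n) (cdiff dt φ n)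
        ≤ s⁻¹ * a ^ 2 + D * b ^ 2 := by
      linarith
    have hmul : dt * (⟪ddq dt φ n, cdiff dt φ n⟫ + c ^ 2 * B (cavg φ n) (cdiff dt φ n))
        ≤ dt * (s⁻¹ * a ^ 2 + D * b ^ 2) := mul_le_mul_of_nonneg_left hX hdt.le
    have hfn : f n = dt * (s⁻¹ * a ^ 2 + D * b ^ 2) := rfl
    linarith [hEdiff, hmul]
  -- telescoping
  have main : ∀ m : ℕ, 2 + m ≤ N → E (2 + m) ≤ E 2 + ∑ n ∈ Finset.Icc 2 (1 + m), f n := by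
    intro m
    induction m with
    | zero => intro _; simp
    | succ k ih =>
      intro hk
      have ihk := ih (by omega)
      have hstep := key (2 + k) (by omega) (by omega)
      have hsum : ∑ n ∈ Finset.Icc 2 (1 + (k + 1)), f n
          = ∑ n ∈ Finset.Icc 2 (1 + k), f n + f (2 + k) := by
        have h1 : 1 + (k + 1) = (1 + k) + 1 := by omega
        have h3 : (1 + k) + 1 = 2 + k := by omega
        rw [h1, Finset.sum_Icc_succ_top (by omega), h3]
      have h2 : 2 + (k + 1) = (2 + k) + 1 := by omega
      rw [h2, hsum]
      linarith
  intro j hj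
  simp only [Finset.mem_Icc] at hj
  obtain ⟨hj2, hjN⟩ := hj
  have hj' : 2 + (j - 2) = j := by omega
  have hmain := main (j - 2) (by omega)
  rw [hj'] at hmain
  have hsub : ∑ n ∈ Finset.Icc 2 (1 + (j - 2)), f n ≤ ∑ n ∈ Finset.Icc 2 (N - 1), f n := by
    apply Finset.sum_le_sum_of_subset_of_nonneg
    · exact Finset.Icc_subset_Icc_right (by omega)
    · intro i _ _; exact hf_nonneg i
  have hsplit : ∑ n ∈ Finset.Icc 2 (N - 1), f n
      = s⁻¹ * ∑ n ∈ Finset.Icc 2 (N - 1), dt * ‖ddq dt η n‖ ^ 2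
        + D * ∑ n ∈ Finset.Icc 2 (N - 1), dt * ‖cdiff dt η n‖ ^ 2 := by
    rw [Finset.mul_sum, Finset.mul_sum, ← Finset.sum_add_distrib]
    apply Finset.sum_congr rfl
    intro i _
    simp only [hf_def]
    ring
  linarith
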